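/- Define integers N(n,k) for n, k ≥ 0 by N(0,0) = 1, N(0,k) = 0 for k ≥ 1, N(n,k) = 0 for k < 0, and the recurrence N(n+1,k) = (n+2k+1)·N(n,k) + (n−2k+3)·N(n,k−1). Then for all n ≥ 0 and 0 ≤ k ≤ ⌊(n+1)/2⌋, N(n,k) = n! · C(n+1, 2k). -/
import Mathlib


/-- The coefficients N(n,k): N(0,0)=1, N(0,k)=0 for k ≠ 0 (in particular k ≥ 1 and k < 0),
and N(n+1,k) = (n+2k+1)·N(n,k) + (n−2k+3)·N(n,k−1). -/
def N : ℕ → ℤ → ℤ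
  | 0, k => if k = 0 then 1 else 0
  | n + 1, k => ((n : ℤ) + 2 * k + 1) * N n k + ((n : ℤ) - 2 * k + 3) * N n (k - 1)

lemma N_neg : ∀ (n : ℕ) (k : ℤ), k < 0 → N n k = 0 := by
  intro n
  induction n with
  | zero => intro k hk; simp [N]; omega
  | succ m ih =>
    intro k hk
    rw [N, ih k hk, ih (k - 1) (by omega)]
    ring

lemma choose_succ_int (n k : ℕ) :
    ((n.choose (k + 1) : ℤ)) * (k + 1) = (n.choose k) * ((n : ℤ) - k) := by
  rcases le_or_gt (k + 1) n with h | h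
  · have h2 := Nat.choose_succ_right_eq n k
    zify [show k ≤ n by omega] at h2
    linarith
  · rcases le_or_gt k n with h' | h'
    · have hkn : k = n := by omega
      subst hkn
      simp [Nat.choose_succ_self]
    · simp [Nat.choose_eq_zero_of_lt h', Nat.choose_eq_zero_of_lt (by omega : n < k + 1)]

lemma N_key : ∀ (n k : ℕ), N n (k : ℤ) = (n.factorial : ℤ) * ((n + 1).choose (2 * k)) := by
  intro n
  induction n with
  | zero =>
    intro k
    cases k with
    | zero => simp [N]
    | succ j =>
      have : 1 < 2 * (j + 1) := by omega
      simp [N, Nat.choose_eq_zero_of_lt this]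
      omega
  | succ m ih =>
    intro k
    cases k with
    | zero =>
      have h0 := ih 0
      norm_num at h0
      rw [N]
      simp only [Nat.cast_zero, zero_sub]
      rw [N_neg m (-1) (by norm_num), h0]
      simp [Nat.factorial_succ]
    | succ j =>
      rw [N]
      rw [show ((j + 1 : ℕ) : ℤ) - 1 = (j : ℤ) by push_cast; ring]
      rw [ih (j + 1), ih j]
      have f1 := choose_succ_int (m + 1) (2 * j + 1)
      have f2 := choose_succ_int (m + 1) (2 * j)
      have P : (((m + 2).choose (2 * (j + 1)) : ℤ))
          = ((m + 1).choose (2 * j + 1) : ℤ) + ((m + 1).choose (2 * (j + 1)) : ℤ) := by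
        rw [show 2 * (j + 1) = 2 * j + 1 + 1 by ring]
        exact_mod_cast Nat.choose_succ_succ' (m + 1) (2 * j + 1)
      rw [show (m + 1).factorial = (m + 1) * m.factorial from Nat.factorial_succ m]
      rw [show 2 * (j + 1) = 2 * j + 1 + 1 by ring] at *
      push_cast
      push_cast at f1 f2 P
      linear_combination ((m.factorial : ℤ)) * f1 - ((m.factorial : ℤ)) * f2
        - ((m : ℤ) + 1) * ((m.factorial : ℤ)) * P

theorem N_eq_factorial_choose (n k : ℕ) (hk : k ≤ (n + 1) / 2) :
    N n k = (n.factorial : ℤ) * ((n + 1).choose (2 * k)) := by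
  exact N_key n k
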